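/- Let V be a finite-dimensional real vector space, W ⊆ V a linear subspace, χ ∈ V a vector not belonging to W, and α ∈ ⋀²V. If χ ∧ α belongs to the two-sided ideal of Λ(V) generated by W, then α ∧ α also belongs to that ideal. -/

import Mathlib

open CliffordAlgebra

/-- Leibniz rule for left contraction. -/
lemma aux_contract_mul {R M : Type*} [CommRing R] [AddCommGroup M] [Module R M]
    {Q : QuadraticForm R M} (d : Module.Dual R M) (x y : CliffordAlgebra Q) :
    contractLeft d (x * y) =
      contractLeft d x * y + involute x * contractLeft d y := by
  induction x using CliffordAlgebra.induction generalizing y with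
  | algebraMap r =>
      simp [contractLeft_algebraMap_mul, contractLeft_algebraMap]
  | ι m =>
      rw [contractLeft_ι_mul, contractLeft_ι, involute_ι, Algebra.smul_def, neg_mul,
        ← sub_eq_add_neg]
  | mul a b iha ihb =>
      rw [mul_assoc, iha, ihb, iha b, map_mul]
      noncomm_ring
  | add a b iha ihb =>
      simp only [add_mul, map_add, iha, ihb]
      abel

/-- The two-sided ideal generated by `ι '' W` is stable under contraction by a
functional vanishing on `W`. -/
lemma aux_contract_mem_span {R M : Type*} [CommRing R] [AddCommGroup M] [Module R M]
    {Q : QuadraticForm R M} (d : Module.Dual R M) (W : Submodule R M)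
    (hd : ∀ w ∈ W, d w = 0) {z : CliffordAlgebra Q}
    (hz : z ∈ TwoSidedIdeal.span (⇑(CliffordAlgebra.ι Q) '' (W : Set M))) :
    contractLeft d z ∈ TwoSidedIdeal.span (⇑(CliffordAlgebra.ι Q) '' (W : Set M)) := by
  set I := TwoSidedIdeal.span (⇑(CliffordAlgebra.ι Q) '' (W : Set M)) with hI
  rw [hI, TwoSidedIdeal.mem_span_iff_mem_addSubgroup_closure] at hz
  induction hz using AddSubgroup.closure_induction with
  | mem x hx =>
      obtain ⟨ab, ⟨a, -, t, ht, rfl⟩, b, -, rfl⟩ := hx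
      obtain ⟨w, hw, rfl⟩ := ht
      show contractLeft d (a * CliffordAlgebra.ι Q w * b) ∈ I
      have hιw : CliffordAlgebra.ι Q w ∈ I :=
        TwoSidedIdeal.subset_span ⟨w, hw, rfl⟩
      rw [mul_assoc, aux_contract_mul, aux_contract_mul, contractLeft_ι, hd w hw, map_zero,
        zero_mul, zero_add, involute_ι, neg_mul, mul_neg]
      refine I.add_mem ?_ (I.neg_mem ?_)
      · rw [← mul_assoc]
        exact I.mul_mem_right _ _ (I.mul_mem_left _ _ hιw)
      · exact I.mul_mem_left _ _ (I.mul_mem_right _ _ hιw)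
  | zero => simp only [map_zero]; exact I.zero_mem

  | add x y _ _ hx hy => rw [map_add]; exact I.add_mem hx hy
  | neg x _ hx => rw [map_neg]; exact I.neg_mem hx

/-- If `χ ∉ W` and `α ∈ ⋀²V` is such that `χ ∧ α` lies in the two-sided ideal of `Λ(V)`
generated by `W`, then `α ∧ α` also lies in that ideal. -/
theorem stmt_4 {V : Type*} [AddCommGroup V] [Module ℝ V] [FiniteDimensional ℝ V]
    (W : Submodule ℝ V) (χ : V) (hχ : χ ∉ W)
    (α : ExteriorAlgebra ℝ V) (hα : α ∈ ⋀[ℝ]^2 V)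
    (h : ExteriorAlgebra.ι ℝ χ * α ∈
      TwoSidedIdeal.span (⇑(ExteriorAlgebra.ι ℝ (M := V)) '' (W : Set V))) :
    α * α ∈ TwoSidedIdeal.span (⇑(ExteriorAlgebra.ι ℝ (M := V)) '' (W : Set V)) := by
  classical
  set I := TwoSidedIdeal.span (⇑(ExteriorAlgebra.ι ℝ (M := V)) '' (W : Set V)) with hI
  -- a functional vanishing on `W` with value `1` at `χ`
  obtain ⟨f, hf0, hfW⟩ := W.exists_dual_map_eq_bot_of_notMem hχ inferInstance
  set φ : Module.Dual ℝ V := (f χ)⁻¹ • f with hφ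
  have hφχ : φ χ = 1 := by simp [hφ, inv_mul_cancel₀ hf0]
  have hφW : ∀ w ∈ W, φ w = 0 := by
    intro w hw
    have : f w ∈ W.map f := Submodule.mem_map_of_mem hw
    rw [hfW] at this
    have h0 : f w = 0 := (Submodule.mem_bot ℝ).mp this
    simp [hφ, h0]
  -- the contraction of `α` is a `1`-vector
  set γ : ExteriorAlgebra ℝ V := contractLeft φ α with hγdef
  have hγ : γ ∈ LinearMap.range (ExteriorAlgebra.ι ℝ (M := V)) := by
    rw [hγdef]
    have hα' : α ∈ LinearMap.range (ExteriorAlgebra.ι ℝ (M := V)) *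
        LinearMap.range (ExteriorAlgebra.ι ℝ (M := V)) := by
      rw [← pow_two]; exact hα
    refine Submodule.mul_induction_on hα' ?_ ?_
    · rintro m ⟨u, rfl⟩ n ⟨v, rfl⟩
      have hc : CliffordAlgebra.contractLeft φ (ExteriorAlgebra.ι ℝ u * ExteriorAlgebra.ι ℝ v)
          = φ u • ExteriorAlgebra.ι ℝ v - φ v • ExteriorAlgebra.ι ℝ u := by
        rw [contractLeft_ι_mul, contractLeft_ι, ← Algebra.commutes, ← Algebra.smul_def]
      exact ⟨φ u • v - φ v • u, by rw [map_sub, map_smul, map_smul, hc]⟩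
    · intro x y hx hy
      rw [map_add]
      exact Submodule.add_mem _ hx hy
  obtain ⟨v, hv⟩ := hγ
  -- `α ≡ ι χ * γ` modulo the ideal
  have hsub : α - ExteriorAlgebra.ι ℝ χ * γ ∈ I := by
    have := aux_contract_mem_span (Q := (0 : QuadraticForm ℝ V)) φ W hφW h
    rwa [contractLeft_ι_mul, hφχ, one_smul] at this
  set z : ExteriorAlgebra ℝ V := ExteriorAlgebra.ι ℝ χ * γ with hz
  -- `z * z = 0`
  have hzz : z * z = 0 := by
    rw [hz, ← hv]
    have h1 : ExteriorAlgebra.ι ℝ v * ExteriorAlgebra.ι ℝ χ =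
        -(ExteriorAlgebra.ι ℝ χ * ExteriorAlgebra.ι ℝ v) :=
      eq_neg_of_add_eq_zero_left (ExteriorAlgebra.ι_add_mul_swap v χ)
    calc ExteriorAlgebra.ι ℝ χ * ExteriorAlgebra.ι ℝ v *
          (ExteriorAlgebra.ι ℝ χ * ExteriorAlgebra.ι ℝ v)
        = ExteriorAlgebra.ι ℝ χ * (ExteriorAlgebra.ι ℝ v * ExteriorAlgebra.ι ℝ χ) *
            ExteriorAlgebra.ι ℝ v := by noncomm_ring
      _ = 0 := by
          rw [h1, mul_neg, ← mul_assoc, neg_mul, ExteriorAlgebra.ι_sq_zero]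
          simp
  have key : α * α = α * (α - z) + (α - z) * z + z * z := by noncomm_ring
  rw [key, hzz, add_zero]
  exact I.add_mem (I.mul_mem_left _ _ hsub) (I.mul_mem_right _ _ hsub)
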